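/- With q^β = γ, q^{2a} = γδ, b = a+N+1 and C_n = (γδq)^{n/2}κ_q^{2n}, the limit as q^α → 0 of q^{a+1} c₁^{-1}(C_n/C_{n-1}) γ_n equals γq(1-q^n)(δ - q^{n-N-1})(1 - q^{n-N-1})(1 - γq^n), the recurrence coefficient γ̃_n of the monic dual q-Hahn polynomials. -/

import Mathlib

open Filter

/-- The symmetric `q`-number `[x]_q`. -/
noncomputable def qnum (q x : ℝ) : ℝ :=
  (q ^ (x / 2) - q ^ (-x / 2)) / (q ^ ((1 : ℝ) / 2) - q ^ (-(1 : ℝ) / 2))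

/-- `κ_q = q^{1/2} - q^{-1/2}`. -/
noncomputable def kq (q : ℝ) : ℝ := q ^ ((1 : ℝ) / 2) - q ^ (-(1 : ℝ) / 2)

noncomputable def c1 (q : ℝ) : ℝ := q ^ ((1 : ℝ) / 2) / (kq q) ^ 2

/-- The coefficient `γ_n` of the three-term recurrence of the non-standard `q`-Racah
polynomials, with real parameters `a`, `b`, `α`, `β`. -/
noncomputable def qRacahGammaR (q a b α β : ℝ) (n : ℕ) : ℝ :=
  qnum q n * qnum q (α + β + n) * qnum q (α + n) * qnum q (β + n) *
    qnum q (b - a + α + β + n) * qnum q (-a - b + β + n) *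
    qnum q (a - b + n) * qnum q (a + b + α + n) /
    (qnum q (α + β + 2 * n - 1) * (qnum q (α + β + 2 * n)) ^ 2 * qnum q (α + β + 2 * n + 1))

lemma qnum_eq {q : ℝ} (hq : 0 < q) (x : ℝ) :
    qnum q x = (q ^ x - 1) / (q ^ (x / 2) * kq q) := by
  have hx : q ^ x = q ^ (x/2) * q ^ (x/2) := by
    rw [← Real.rpow_add hq]; norm_num
  have hpos : (0:ℝ) < q ^ (x/2) := Real.rpow_pos_of_pos hq _
  unfold qnum kq
  rw [show -x/2 = -(x/2) by ring, Real.rpow_neg hq.le, hx]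
  rw [show q ^ (x/2) * q ^ (x/2) - 1 = q ^ (x/2) * (q ^ (x/2) - (q ^ (x/2))⁻¹) by
    field_simp]
  rw [mul_div_mul_left _ _ hpos.ne']

lemma big_cancel (c k a1 a2 a3 a4 a5 a6 a7 a8 b1 b2 b3 M1 M2 M3 M4 M5 M6 M7 M8 L1 L2 L3 : ℝ)
    (hM : M1*M2*M3*M4*M5*M6*M7*M8 = L1*L2*L2*L3)
    (hM1 : M1 ≠ 0) (hM2 : M2 ≠ 0) (hM3 : M3 ≠ 0) (hM4 : M4 ≠ 0)
    (hM5 : M5 ≠ 0) (hM6 : M6 ≠ 0) (hM7 : M7 ≠ 0) (hM8 : M8 ≠ 0)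
    (hL1 : L1 ≠ 0) (hL2 : L2 ≠ 0) (hL3 : L3 ≠ 0) (hk : k ≠ 0)
    (hb1 : b1 ≠ 0) (hb2 : b2 ≠ 0) (hb3 : b3 ≠ 0) :
    c * k^4 * (a1/(M1*k) * (a2/(M2*k)) * (a3/(M3*k)) * (a4/(M4*k)) * (a5/(M5*k)) *
      (a6/(M6*k)) * (a7/(M7*k)) * (a8/(M8*k)) /
      (b1/(L1*k) * (b2/(L2*k))^2 * (b3/(L3*k)))) =
    c * (a1*a2*a3*a4*a5*a6*a7*a8) / (b1*b2^2*b3) := by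
  have e1 : a1/(M1*k) * (a2/(M2*k)) * (a3/(M3*k)) * (a4/(M4*k)) * (a5/(M5*k)) *
      (a6/(M6*k)) * (a7/(M7*k)) * (a8/(M8*k))
      = (a1*a2*a3*a4*a5*a6*a7*a8) / (M1*M2*M3*M4*M5*M6*M7*M8*k^8) := by
    rw [div_mul_div_comm, div_mul_div_comm, div_mul_div_comm, div_mul_div_comm,
      div_mul_div_comm, div_mul_div_comm, div_mul_div_comm]
    congr 1; ring
  have e2 : b1/(L1*k) * (b2/(L2*k))^2 * (b3/(L3*k))
      = (b1*b2^2*b3) / (L1*L2*L2*L3*k^4) := by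
    rw [div_pow, div_mul_div_comm, div_mul_div_comm]
    congr 1; ring
  rw [e1, e2, hM]
  rw [div_div_div_eq, ← mul_div_assoc, div_eq_div_iff (by simp [*]) (by simp [*])]
  ring

theorem qracah_gamma_to_dualqhahn_gamma (q γ δ : ℝ) (hq0 : 0 < q) (hq1 : q < 1)
    (hγ0 : 0 < γ * q) (hγ1 : γ * q < 1) (hδ0 : 0 < δ * q) (hδ1 : δ * q < 1)
    (N n : ℕ) (hn1 : 1 ≤ n) (hnN : n ≤ N) :
    Tendsto (fun t : ℝ =>
        q ^ (Real.logb q (γ * δ) / 2 + 1) / c1 q *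
          -- the ratio `C_n / C_{n-1} = (γδq)^{1/2} κ_q²`
          ((γ * δ * q) ^ ((1 : ℝ) / 2) * (kq q) ^ 2) *
          qRacahGammaR q (Real.logb q (γ * δ) / 2) (Real.logb q (γ * δ) / 2 + N + 1)
            (Real.logb q t) (Real.logb q γ) n)
      (nhdsWithin 0 (Set.Ioi 0))
      (nhds (γ * q * (1 - q ^ n) * (δ - q ^ ((n : ℝ) - N - 1)) * (1 - q ^ ((n : ℝ) - N - 1)) *
        (1 - γ * q ^ n))) := by
  have hq1' : q ≠ 1 := ne_of_lt hq1
  have hγ : 0 < γ := by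
    rcases mul_pos_iff.mp hγ0 with ⟨h, _⟩ | ⟨_, h⟩
    · exact h
    · linarith
  have hδ : 0 < δ := by
    rcases mul_pos_iff.mp hδ0 with ⟨h, _⟩ | ⟨_, h⟩
    · exact h
    · linarith
  set A := Real.logb q (γ * δ) with hA
  set bb := Real.logb q γ with hbb
  have hAq : q ^ A = γ * δ := by rw [hA]; exact Real.rpow_logb hq0 hq1' (by positivity)
  have hbq : q ^ bb = γ := by rw [hbb]; exact Real.rpow_logb hq0 hq1' hγ
  have hs0 : (0:ℝ) < q ^ ((1:ℝ)/2) := Real.rpow_pos_of_pos hq0 _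
  have hkneg : kq q < 0 := by
    have h1 : q ^ ((1:ℝ)/2) < 1 := Real.rpow_lt_one hq0.le hq1 (by norm_num)
    have h2 : (1:ℝ) < q ^ (-(1:ℝ)/2) := by
      rw [show -(1:ℝ)/2 = -((1:ℝ)/2) by ring, Real.rpow_neg hq0.le]
      exact (one_lt_inv_iff₀.mpr ⟨hs0, h1⟩)
    unfold kq; linarith
  have hk : kq q ≠ 0 := ne_of_lt hkneg
  have hhn : ∀ m : ℕ, q ^ ((m:ℝ)/2) = (q ^ ((1:ℝ)/2)) ^ m := fun m => by
    rw [show (m:ℝ)/2 = (1:ℝ)/2 * (m:ℝ) by ring, Real.rpow_mul hq0.le, Real.rpow_natCast]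
  -- the limit function of `t`
  have heq : (fun t : ℝ => γ * δ * q *
      ((q ^ n - 1) * (t * γ * q ^ n - 1) * (t * q ^ n - 1) * (γ * q ^ n - 1) *
        (t * γ * q ^ (n + N + 1) - 1) * (γ * q ^ ((n:ℝ) - ↑N - 1) / (γ * δ) - 1) *
        (q ^ ((n:ℝ) - ↑N - 1) - 1) * (γ * δ * q ^ (N + 1) * t * q ^ n - 1)) /
      ((t * γ * q ^ (2 * n) / q - 1) * (t * γ * q ^ (2 * n) - 1) ^ 2 *
        (t * γ * q ^ (2 * n) * q - 1))) =ᶠ[nhdsWithin 0 (Set.Ioi 0)]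
      (fun t : ℝ =>
        q ^ (A / 2 + 1) / c1 q * ((γ * δ * q) ^ ((1 : ℝ) / 2) * (kq q) ^ 2) *
          qRacahGammaR q (A / 2) (A / 2 + N + 1) (Real.logb q t) bb n) := by
    filter_upwards [Ioo_mem_nhdsGT_of_mem
      (Set.mem_Ico.mpr ⟨le_refl (0:ℝ), (by positivity : (0:ℝ) < 1/(γ+1))⟩)] with t ht
    obtain ⟨ht0, ht1⟩ := ht
    have htγ : t * γ < 1 := by
      have h := (lt_div_iff₀ (by positivity : (0:ℝ) < γ + 1)).mp ht1
      nlinarith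
    have hq2n : q ^ (2*n) ≤ q := by
      calc q ^ (2*n) ≤ q ^ 1 := pow_le_pow_of_le_one hq0.le hq1.le (by omega)
      _ = q := pow_one q
    have htγpos : 0 < t * γ := mul_pos ht0 hγ
    have haux : t * γ * q ^ (2*n) ≤ t * γ * q := by nlinarith
    have hb2 : t * γ * q ^ (2*n) < 1 := by nlinarith
    have hb1 : t * γ * q ^ (2*n) / q < 1 := by
      rw [div_lt_one hq0]; nlinarith
    have hb3 : t * γ * q ^ (2*n) * q < 1 := by nlinarith [pow_pos hq0 (2*n)]
    symm
    set aa := Real.logb q t with haa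
    have hαq : q ^ aa = t := by rw [haa]; exact Real.rpow_logb hq0 hq1' ht0
    -- prefactor
    have hgd : γ * δ * q = q ^ (A + 1) := by rw [Real.rpow_add hq0, hAq, Real.rpow_one]
    have epref : q ^ (A/2 + 1) * q ^ ((A+1) * ((1:ℝ)/2)) = q ^ (A+1) * q ^ ((1:ℝ)/2) := by
      rw [← Real.rpow_add hq0, ← Real.rpow_add hq0]; congr 1; ring
    have hpref : q ^ (A / 2 + 1) / c1 q * ((γ * δ * q) ^ ((1 : ℝ) / 2) * (kq q) ^ 2)
        = γ * δ * q * kq q ^ 4 := by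
      rw [hgd, ← Real.rpow_mul hq0.le]
      simp only [c1]
      rw [div_div_eq_mul_div, div_mul_eq_mul_div, div_eq_iff hs0.ne']
      linear_combination kq q ^ 4 * epref
    -- the twelve `qnum` factors
    have F1 : q ^ ((n:ℕ):ℝ) = q ^ n := Real.rpow_natCast q n
    have H1 : q ^ (((n:ℕ):ℝ)/2) = (q ^ ((1:ℝ)/2)) ^ n := hhn n
    have F2 : q ^ (aa + bb + (n:ℝ)) = t * γ * q ^ n := by
      rw [Real.rpow_add hq0, Real.rpow_add hq0, hαq, hbq, Real.rpow_natCast]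
    have H2 : q ^ ((aa + bb + (n:ℝ))/2)
        = q ^ (aa/2) * q ^ (bb/2) * (q ^ ((1:ℝ)/2)) ^ n := by
      rw [show (aa + bb + (n:ℝ))/2 = aa/2 + bb/2 + (n:ℝ)/2 by ring,
        Real.rpow_add hq0, Real.rpow_add hq0, hhn]
    have F3 : q ^ (aa + (n:ℝ)) = t * q ^ n := by
      rw [Real.rpow_add hq0, hαq, Real.rpow_natCast]
    have H3 : q ^ ((aa + (n:ℝ))/2) = q ^ (aa/2) * (q ^ ((1:ℝ)/2)) ^ n := by
      rw [show (aa + (n:ℝ))/2 = aa/2 + (n:ℝ)/2 by ring, Real.rpow_add hq0, hhn]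
    have F4 : q ^ (bb + (n:ℝ)) = γ * q ^ n := by
      rw [Real.rpow_add hq0, hbq, Real.rpow_natCast]
    have H4 : q ^ ((bb + (n:ℝ))/2) = q ^ (bb/2) * (q ^ ((1:ℝ)/2)) ^ n := by
      rw [show (bb + (n:ℝ))/2 = bb/2 + (n:ℝ)/2 by ring, Real.rpow_add hq0, hhn]
    have F5 : q ^ (A/2 + (N:ℝ) + 1 - A/2 + aa + bb + (n:ℝ)) = t * γ * q ^ (n + N + 1) := by
      rw [show A/2 + (N:ℝ) + 1 - A/2 + aa + bb + (n:ℝ) = aa + bb + ((n+N+1 : ℕ):ℝ) by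
        push_cast; ring, Real.rpow_add hq0, Real.rpow_add hq0, hαq, hbq, Real.rpow_natCast]
    have H5 : q ^ ((A/2 + (N:ℝ) + 1 - A/2 + aa + bb + (n:ℝ))/2)
        = q ^ (aa/2) * q ^ (bb/2) * ((q ^ ((1:ℝ)/2)) ^ n * (q ^ ((1:ℝ)/2)) ^ (N+1)) := by
      rw [show (A/2 + (N:ℝ) + 1 - A/2 + aa + bb + (n:ℝ))/2
          = aa/2 + bb/2 + ((n:ℝ)/2 + ((N+1:ℕ):ℝ)/2) by push_cast; ring,
        Real.rpow_add hq0, Real.rpow_add hq0, Real.rpow_add hq0, hhn, hhn]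
    have F6 : q ^ (-(A/2) - (A/2 + (N:ℝ) + 1) + bb + (n:ℝ))
        = γ * q ^ ((n:ℝ) - ↑N - 1) / (γ * δ) := by
      rw [show -(A/2) - (A/2 + (N:ℝ) + 1) + bb + (n:ℝ) = bb + ((n:ℝ) - ↑N - 1) - A by ring,
        Real.rpow_sub hq0, Real.rpow_add hq0, hbq, hAq]
    have H6 : q ^ ((-(A/2) - (A/2 + (N:ℝ) + 1) + bb + (n:ℝ))/2)
        = q ^ (bb/2) * (q ^ ((1:ℝ)/2)) ^ n / (q ^ (A/2) * (q ^ ((1:ℝ)/2)) ^ (N+1)) := by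
      rw [show (-(A/2) - (A/2 + (N:ℝ) + 1) + bb + (n:ℝ))/2
          = (bb/2 + (n:ℝ)/2) - (A/2 + ((N+1:ℕ):ℝ)/2) by push_cast; ring,
        Real.rpow_sub hq0, Real.rpow_add hq0, Real.rpow_add hq0, hhn, hhn]
    have F7 : q ^ (A/2 - (A/2 + (N:ℝ) + 1) + (n:ℝ)) = q ^ ((n:ℝ) - ↑N - 1) := by
      rw [show A/2 - (A/2 + (N:ℝ) + 1) + (n:ℝ) = (n:ℝ) - ↑N - 1 by ring]
    have H7 : q ^ ((A/2 - (A/2 + (N:ℝ) + 1) + (n:ℝ))/2)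
        = (q ^ ((1:ℝ)/2)) ^ n / (q ^ ((1:ℝ)/2)) ^ (N+1) := by
      rw [show (A/2 - (A/2 + (N:ℝ) + 1) + (n:ℝ))/2 = (n:ℝ)/2 - ((N+1:ℕ):ℝ)/2 by
        push_cast; ring, Real.rpow_sub hq0, hhn, hhn]
    have F8 : q ^ (A/2 + (A/2 + (N:ℝ) + 1) + aa + (n:ℝ))
        = γ * δ * q ^ (N + 1) * t * q ^ n := by
      rw [show A/2 + (A/2 + (N:ℝ) + 1) + aa + (n:ℝ) = A + ((N+1:ℕ):ℝ) + aa + ((n:ℕ):ℝ) by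
        push_cast; ring, Real.rpow_add hq0, Real.rpow_add hq0, Real.rpow_add hq0, hAq,
        hαq, Real.rpow_natCast, Real.rpow_natCast]
    have H8 : q ^ ((A/2 + (A/2 + (N:ℝ) + 1) + aa + (n:ℝ))/2)
        = q ^ (A/2) * (q ^ ((1:ℝ)/2)) ^ (N+1) * q ^ (aa/2) * (q ^ ((1:ℝ)/2)) ^ n := by
      rw [show (A/2 + (A/2 + (N:ℝ) + 1) + aa + (n:ℝ))/2
          = A/2 + ((N+1:ℕ):ℝ)/2 + aa/2 + ((n:ℕ):ℝ)/2 by push_cast; ring,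
        Real.rpow_add hq0, Real.rpow_add hq0, Real.rpow_add hq0, hhn, hhn]
    have F9 : q ^ (aa + bb + 2 * (n:ℝ) - 1) = t * γ * q ^ (2*n) / q := by
      rw [show aa + bb + 2 * (n:ℝ) - 1 = aa + bb + ((2*n : ℕ):ℝ) - 1 by push_cast; ring,
        Real.rpow_sub hq0, Real.rpow_add hq0, Real.rpow_add hq0, hαq, hbq,
        Real.rpow_natCast, Real.rpow_one]
    have H9 : q ^ ((aa + bb + 2 * (n:ℝ) - 1)/2)
        = q ^ (aa/2) * q ^ (bb/2) * (q ^ ((1:ℝ)/2)) ^ (2*n) / q ^ ((1:ℝ)/2) := by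
      rw [show (aa + bb + 2 * (n:ℝ) - 1)/2
          = (aa/2 + bb/2 + ((2*n:ℕ):ℝ)/2) - (1:ℝ)/2 by push_cast; ring,
        Real.rpow_sub hq0, Real.rpow_add hq0, Real.rpow_add hq0, hhn]
    have F10 : q ^ (aa + bb + 2 * (n:ℝ)) = t * γ * q ^ (2*n) := by
      rw [show aa + bb + 2 * (n:ℝ) = aa + bb + ((2*n : ℕ):ℝ) by push_cast; ring,
        Real.rpow_add hq0, Real.rpow_add hq0, hαq, hbq, Real.rpow_natCast]
    have H10 : q ^ ((aa + bb + 2 * (n:ℝ))/2)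
        = q ^ (aa/2) * q ^ (bb/2) * (q ^ ((1:ℝ)/2)) ^ (2*n) := by
      rw [show (aa + bb + 2 * (n:ℝ))/2 = aa/2 + bb/2 + ((2*n:ℕ):ℝ)/2 by push_cast; ring,
        Real.rpow_add hq0, Real.rpow_add hq0, hhn]
    have F11 : q ^ (aa + bb + 2 * (n:ℝ) + 1) = t * γ * q ^ (2*n) * q := by
      rw [show aa + bb + 2 * (n:ℝ) + 1 = aa + bb + ((2*n : ℕ):ℝ) + 1 by push_cast; ring,
        Real.rpow_add hq0, Real.rpow_add hq0, Real.rpow_add hq0, hαq, hbq,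
        Real.rpow_natCast, Real.rpow_one]
    have H11 : q ^ ((aa + bb + 2 * (n:ℝ) + 1)/2)
        = q ^ (aa/2) * q ^ (bb/2) * (q ^ ((1:ℝ)/2)) ^ (2*n) * q ^ ((1:ℝ)/2) := by
      rw [show (aa + bb + 2 * (n:ℝ) + 1)/2
          = aa/2 + bb/2 + ((2*n:ℕ):ℝ)/2 + (1:ℝ)/2 by push_cast; ring,
        Real.rpow_add hq0, Real.rpow_add hq0, Real.rpow_add hq0, hhn]
    simp only [qRacahGammaR, qnum_eq hq0]
    rw [hpref, F1, H1, F2, H2, F3, H3, F4, H4, F5, H5, F6, H6, F7, H7, F8, H8, F9, H9,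
      F10, H10, F11, H11]
    have hXp : (0:ℝ) < q ^ (aa/2) := Real.rpow_pos_of_pos hq0 _
    have hGp : (0:ℝ) < q ^ (bb/2) := Real.rpow_pos_of_pos hq0 _
    have hAp : (0:ℝ) < q ^ (A/2) := Real.rpow_pos_of_pos hq0 _
    apply big_cancel
    · field_simp
      ring
    · positivity
    · positivity
    · positivity
    · positivity
    · positivity
    · positivity
    · positivity
    · positivity
    · positivity
    · positivity
    · positivity
    · exact hk
    · exact sub_ne_zero.mpr (ne_of_lt hb1)
    · exact sub_ne_zero.mpr (ne_of_lt hb2)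
    · exact sub_ne_zero.mpr (ne_of_lt hb3)
  refine Filter.Tendsto.congr' heq ?_
  have hc : ContinuousAt (fun t : ℝ => γ * δ * q *
      ((q ^ n - 1) * (t * γ * q ^ n - 1) * (t * q ^ n - 1) * (γ * q ^ n - 1) *
        (t * γ * q ^ (n + N + 1) - 1) * (γ * q ^ ((n:ℝ) - ↑N - 1) / (γ * δ) - 1) *
        (q ^ ((n:ℝ) - ↑N - 1) - 1) * (γ * δ * q ^ (N + 1) * t * q ^ n - 1)) /
      ((t * γ * q ^ (2 * n) / q - 1) * (t * γ * q ^ (2 * n) - 1) ^ 2 *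
        (t * γ * q ^ (2 * n) * q - 1))) 0 := by
    apply ContinuousAt.div
    · fun_prop
    · fun_prop
    · norm_num
  have h0 : γ * δ * q *
      ((q ^ n - 1) * ((0:ℝ) * γ * q ^ n - 1) * ((0:ℝ) * q ^ n - 1) * (γ * q ^ n - 1) *
        ((0:ℝ) * γ * q ^ (n + N + 1) - 1) * (γ * q ^ ((n:ℝ) - ↑N - 1) / (γ * δ) - 1) *
        (q ^ ((n:ℝ) - ↑N - 1) - 1) * (γ * δ * q ^ (N + 1) * (0:ℝ) * q ^ n - 1)) /
      (((0:ℝ) * γ * q ^ (2 * n) / q - 1) * ((0:ℝ) * γ * q ^ (2 * n) - 1) ^ 2 *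
        ((0:ℝ) * γ * q ^ (2 * n) * q - 1))
      = γ * q * (1 - q ^ n) * (δ - q ^ ((n : ℝ) - N - 1)) * (1 - q ^ ((n : ℝ) - N - 1)) *
        (1 - γ * q ^ n) := by
    norm_num
    field_simp
    ring
  rw [← h0]
  exact hc.tendsto.mono_left nhdsWithin_le_nhds
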